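/- Let C ⊆ V be independent in G. For each nonempty W ⊆ V∖C, let N_C(W) = {y ∈ C : y is adjacent to some element of W} and let e_C^W be the uniform distribution on N_C(W) ∪ W. Then M(G,C) equals the convex hull of { e_C^W : ∅ ≠ W ⊆ V∖C } ∪ { δ_x : x ∈ C }, where δ_x is the point mass at x. -/

import Mathlib

/-- The polytope of `C`-modes of a graph `G`, inside the probability simplex. -/
def modePolytope {V : Type*} [Fintype V] (G : SimpleGraph V) (C : Set V) :
    Set (V → ℝ) :=
  {p | (∀ v, 0 ≤ p v) ∧ (∑ v, p v = 1) ∧ ∀ x ∈ C, ∀ y, G.Adj x y → p y ≤ p x}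

/-- The uniform probability distribution on a finite subset. -/
noncomputable def uniformOn {V : Type*} [DecidableEq V] (s : Finset V) : V → ℝ :=
  fun v => if v ∈ s then (s.card : ℝ)⁻¹ else 0

/-- `N_C(W)`: the elements of `C` adjacent to some element of `W`. -/
def modeNbrs {V : Type*} [DecidableEq V] (G : SimpleGraph V) [DecidableRel G.Adj]
    (C W : Finset V) : Finset V :=
  C.filter fun y => ∃ w ∈ W, G.Adj y w

section Aux

variable {V : Type*} [Fintype V] [DecidableEq V]
  (G : SimpleGraph V) [DecidableRel G.Adj] (C : Finset V)

/-- The generating set of the mode polytope. -/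
def modeGens : Set (V → ℝ) :=
  ({q | ∃ W : Finset V, W.Nonempty ∧ (∀ w ∈ W, w ∉ C) ∧
      q = uniformOn (modeNbrs G C W ∪ W)} ∪
   {q | ∃ x ∈ C, q = uniformOn {x}})

variable {G C}

lemma uniformOn_nonneg (s : Finset V) (v : V) : 0 ≤ uniformOn s v := by
  unfold uniformOn; positivity

lemma uniformOn_singleton (x v : V) :
    uniformOn ({x} : Finset V) v = if v = x then 1 else 0 := by
  simp [uniformOn]

lemma sum_uniformOn {s : Finset V} (hs : s.Nonempty) : ∑ v, uniformOn s v = 1 := by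
  unfold uniformOn
  rw [Finset.sum_ite_mem, Finset.univ_inter, Finset.sum_const, nsmul_eq_mul,
    mul_inv_cancel₀]
  exact_mod_cast Finset.card_ne_zero_of_mem hs.choose_spec

lemma convex_modePolytope : Convex ℝ (modePolytope G (↑C : Set V)) := by
  intro p hp q hq a b ha hb hab
  obtain ⟨hp0, hp1, hpm⟩ := hp
  obtain ⟨hq0, hq1, hqm⟩ := hq
  refine ⟨fun v => ?_, ?_, fun x hx y hxy => ?_⟩
  · have := hp0 v; have := hq0 v
    simp only [Pi.add_apply, Pi.smul_apply, smul_eq_mul]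
    positivity
  · simp only [Pi.add_apply, Pi.smul_apply, smul_eq_mul]
    rw [Finset.sum_add_distrib, ← Finset.mul_sum, ← Finset.mul_sum, hp1, hq1]
    simpa using hab
  · simp only [Pi.add_apply, Pi.smul_apply, smul_eq_mul]
    exact add_le_add (mul_le_mul_of_nonneg_left (hpm x hx y hxy) ha)
      (mul_le_mul_of_nonneg_left (hqm x hx y hxy) hb)

lemma modeGens_subset (hInd : ∀ x ∈ C, ∀ y ∈ C, ¬ G.Adj x y) :
    modeGens G C ⊆ modePolytope G (↑C : Set V) := by
  rintro q (⟨W, hWne, hWC, rfl⟩ | ⟨x, hx, rfl⟩)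
  · have hAne : (modeNbrs G C W ∪ W).Nonempty :=
      ⟨hWne.choose, Finset.mem_union_right _ hWne.choose_spec⟩
    refine ⟨uniformOn_nonneg _, sum_uniformOn hAne, fun x hx y hxy => ?_⟩
    unfold uniformOn
    by_cases hy : y ∈ modeNbrs G C W ∪ W
    · have hyW : y ∈ W := by
        rcases Finset.mem_union.1 hy with hy' | hy'
        · exact absurd hxy (hInd x hx y (Finset.mem_filter.1 hy').1)
        · exact hy'
      have hxA : x ∈ modeNbrs G C W ∪ W :=
        Finset.mem_union_left _ (Finset.mem_filter.2 ⟨hx, y, hyW, hxy⟩)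
      simp [hy, hxA]
    · rw [if_neg hy]
      split <;> positivity
  · refine ⟨uniformOn_nonneg _, sum_uniformOn ⟨x, Finset.mem_singleton_self x⟩,
      fun x' hx' y hxy => ?_⟩
    rw [uniformOn_singleton, uniformOn_singleton]
    by_cases hyx : y = x
    · exact absurd (hyx ▸ hxy) (hInd x' hx' x hx)
    · simp only [hyx, if_false]; positivity

/-- Uniform distributions on subsets of `C` are in the hull (mixtures of δ's). -/
lemma uniformOn_subset_C_mem (hE : (E : Finset V).Nonempty) (hEC : E ⊆ C) :
    uniformOn E ∈ convexHull ℝ (modeGens G C) := by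
  have hcard : (0:ℝ) < E.card := by exact_mod_cast Finset.card_pos.2 hE
  have : uniformOn E = ∑ x ∈ E, ((E.card : ℝ)⁻¹) • uniformOn {x} := by
    funext v
    simp only [Finset.sum_apply, Pi.smul_apply, smul_eq_mul, uniformOn_singleton,
      mul_ite, mul_one, mul_zero]
    rw [Finset.sum_ite_eq E v fun _ => (E.card : ℝ)⁻¹]
    simp [uniformOn]
  rw [this]
  refine (convex_convexHull ℝ _).sum_mem (fun i _ => by positivity) ?_
    (fun i hi => subset_convexHull ℝ _ (Or.inr ⟨i, hEC hi, rfl⟩))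
  rw [Finset.sum_const, nsmul_eq_mul, mul_inv_cancel₀ (ne_of_gt hcard)]

/-- Key lemma: if `S` is closed under taking `C`-neighbors of its non-`C` part,
then the uniform distribution on `S` is in the hull. -/
lemma uniformOn_mem_hull {S : Finset V} (hS : S.Nonempty)
    (hN : modeNbrs G C (S \ C) ⊆ S) :
    uniformOn S ∈ convexHull ℝ (modeGens G C) := by
  set W := S \ C with hW
  set A := modeNbrs G C W ∪ W with hA
  have hAS : A ⊆ S := Finset.union_subset hN (Finset.sdiff_subset)
  set E := S \ A with hE
  have hWC : ∀ w ∈ W, w ∉ C := fun w hw => (Finset.mem_sdiff.1 hw).2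
  have hEC : E ⊆ C := by
    intro x hx
    rcases Finset.mem_sdiff.1 hx with ⟨hxS, hxA⟩
    by_contra hxC
    exact hxA (Finset.mem_union_right _ (Finset.mem_sdiff.2 ⟨hxS, hxC⟩))
  have hSAE : ∀ v, v ∈ S ↔ (v ∈ A ∨ v ∈ E) := by
    intro v
    constructor
    · intro hv
      by_cases hvA : v ∈ A
      · exact Or.inl hvA
      · exact Or.inr (Finset.mem_sdiff.2 ⟨hv, hvA⟩)
    · rintro (hv | hv)
      · exact hAS hv
      · exact (Finset.mem_sdiff.1 hv).1
  have hdisj : ∀ v, v ∈ A → v ∉ E := fun v hv hv' => (Finset.mem_sdiff.1 hv').2 hv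
  have hcardS : (0:ℝ) < S.card := by exact_mod_cast Finset.card_pos.2 hS
  by_cases hWne : W.Nonempty
  · -- A is nonempty and a generator
    have hAne : A.Nonempty := ⟨hWne.choose, Finset.mem_union_right _ hWne.choose_spec⟩
    have hcardA : (0:ℝ) < A.card := by exact_mod_cast Finset.card_pos.2 hAne
    have hAgen : uniformOn A ∈ convexHull ℝ (modeGens G C) :=
      subset_convexHull ℝ _ (Or.inl ⟨W, hWne, hWC, rfl⟩)
    by_cases hEne : E.Nonempty
    · have hEgen := uniformOn_subset_C_mem (G := G) hEne hEC
      have hcardE : (0:ℝ) < E.card := by exact_mod_cast Finset.card_pos.2 hEne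
      have hcards : (A.card : ℝ) + E.card = S.card := by
        rw [hE]
        rw [Finset.cast_card_sdiff hAS]
        ring
      have key : uniformOn S =
          ((A.card : ℝ) / S.card) • uniformOn A + ((E.card : ℝ) / S.card) • uniformOn E := by
        funext v
        simp only [Pi.add_apply, Pi.smul_apply, smul_eq_mul, uniformOn]
        by_cases hvA : v ∈ A
        · have hvS : v ∈ S := hAS hvA
          have hvE : v ∉ E := hdisj v hvA
          simp only [hvA, hvS, hvE, if_true, if_false, mul_zero, add_zero]
          field_simp
        · by_cases hvE : v ∈ E
          · have hvS : v ∈ S := (hSAE v).2 (Or.inr hvE)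
            simp only [hvA, hvS, hvE, if_true, if_false, mul_zero, zero_add]
            field_simp
          · have hvS : v ∉ S := fun h => by rcases (hSAE v).1 h with h | h <;> tauto
            simp [hvA, hvE, hvS]
      rw [key]
      exact (convex_convexHull ℝ _) hAgen hEgen (by positivity) (by positivity)
        (by field_simp; exact hcards)
    · -- E empty: S = A
      have hSA : S = A := by
        apply Finset.Subset.antisymm _ hAS
        intro v hv
        rcases (hSAE v).1 hv with h | h
        · exact h
        · exact absurd ⟨v, h⟩ hEne
      rw [hSA]; exact hAgen
  · -- W empty: S ⊆ C
    have hSC : S ⊆ C := by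
      intro v hv
      by_contra hvC
      exact hWne ⟨v, Finset.mem_sdiff.2 ⟨hv, hvC⟩⟩
    exact uniformOn_subset_C_mem (G := G) hS hSC

end Aux

/-- For an independent set `C`, the mode polytope `M(G,C)` is the convex hull of the
uniform distributions `e_C^W` on `N_C(W) ∪ W` for nonempty `W ⊆ V∖C`, together with
the point masses `δ_x` for `x ∈ C`. -/
theorem modePolytope_eq_convexHull {V : Type*} [Fintype V] [DecidableEq V]
    (G : SimpleGraph V) [DecidableRel G.Adj] (C : Finset V)
    (hInd : ∀ x ∈ C, ∀ y ∈ C, ¬ G.Adj x y) :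
    modePolytope G ↑C =
      convexHull ℝ
        ({q | ∃ W : Finset V, W.Nonempty ∧ (∀ w ∈ W, w ∉ C) ∧
            q = uniformOn (modeNbrs G C W ∪ W)} ∪
         {q | ∃ x ∈ C, q = uniformOn {x}}) := by
  show modePolytope G ↑C = convexHull ℝ (modeGens G C)
  apply Set.Subset.antisymm
  · -- forward: strong induction on support size
    suffices H : ∀ n : ℕ, ∀ p : V → ℝ,
        (Finset.univ.filter fun v => p v ≠ 0).card ≤ n →
        p ∈ modePolytope G (↑C : Set V) → p ∈ convexHull ℝ (modeGens G C) by
      intro p hp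
      exact H _ p le_rfl hp
    intro n
    induction n with
    | zero =>
      intro p hcard hp
      exfalso
      obtain ⟨hp0, hp1, hpm⟩ := hp
      have : ∀ v, p v = 0 := by
        intro v
        by_contra hv
        have : v ∈ Finset.univ.filter fun v => p v ≠ 0 := by simp [hv]
        have := Finset.card_pos.2 ⟨v, this⟩
        omega
      simp [this] at hp1
    | succ n ih =>
      intro p hcard hp
      obtain ⟨hp0, hp1, hpm⟩ := hp
      set S := Finset.univ.filter fun v => p v ≠ 0 with hSdef
      have hS : S.Nonempty := by
        by_contra h
        rw [Finset.not_nonempty_iff_eq_empty] at h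
        have : ∀ v, p v = 0 := by
          intro v
          by_contra hv
          have : v ∈ S := by simp [hSdef, hv]
          simp [h] at this
        simp [this] at hp1
      have hmemS : ∀ v, v ∈ S ↔ p v ≠ 0 := fun v => by simp [hSdef]
      have hposS : ∀ v ∈ S, 0 < p v := fun v hv =>
        lt_of_le_of_ne (hp0 v) (Ne.symm ((hmemS v).1 hv))
      set t := S.inf' hS p with ht
      have htle : ∀ v ∈ S, t ≤ p v := fun v hv => Finset.inf'_le p hv
      obtain ⟨v0, hv0S, hv0⟩ := S.exists_mem_eq_inf' hS p
      have htpos : 0 < t := by rw [ht, hv0]; exact hposS v0 hv0S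
      have hsumS : ∑ v ∈ S, p v = 1 := by
        rw [← hp1]
        apply Finset.sum_subset (Finset.subset_univ S)
        intro v _ hv
        by_contra h
        exact hv ((hmemS v).2 h)
      set μ := t * S.card with hμ
      have hμle : μ ≤ 1 := by
        rw [← hsumS, hμ]
        calc t * S.card = ∑ _v ∈ S, t := by rw [Finset.sum_const, nsmul_eq_mul]; ring
        _ ≤ ∑ v ∈ S, p v := Finset.sum_le_sum htle
      have hcardS : (0:ℝ) < S.card := by exact_mod_cast Finset.card_pos.2 hS
      have hNS : modeNbrs G C (S \ C) ⊆ S := by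
        intro y hy
        obtain ⟨hyC, w, hw, hadj⟩ := Finset.mem_filter.1 hy
        have hwS : w ∈ S := (Finset.mem_sdiff.1 hw).1
        have : 0 < p y := lt_of_lt_of_le (hposS w hwS) (hpm y hyC w hadj)
        exact (hmemS y).2 (ne_of_gt this)
      have hUS := uniformOn_mem_hull (G := G) (C := C) hS hNS
      by_cases hμ1 : μ = 1
      · -- p is exactly uniformOn S
        have hall : ∀ v ∈ S, p v = t := by
          have hsum0 : ∑ v ∈ S, (p v - t) = 0 := by
            rw [Finset.sum_sub_distrib, hsumS, Finset.sum_const, nsmul_eq_mul]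
            rw [hμ] at hμ1
            linarith [hμ1]
          intro v hv
          have := (Finset.sum_eq_zero_iff_of_nonneg
            (fun v hv => sub_nonneg.2 (htle v hv))).1 hsum0 v hv
          linarith
        have hpeq : p = uniformOn S := by
          funext v
          unfold uniformOn
          by_cases hv : v ∈ S
          · rw [if_pos hv, hall v hv]
            have : t * S.card = 1 := hμ1
            field_simp
            linarith [this]
          · rw [if_neg hv]
            by_contra h
            exact hv ((hmemS v).2 h)
        rw [hpeq]
        exact hUS
      · have hμlt : μ < 1 := lt_of_le_of_ne hμle hμ1
        have h1μ : (0:ℝ) < 1 - μ := by linarith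
        set q : V → ℝ := fun v => (1 - μ)⁻¹ * (if v ∈ S then p v - t else 0) with hq
        have hq0 : ∀ v, 0 ≤ q v := by
          intro v
          rw [hq]
          by_cases hv : v ∈ S
          · simp only [hv, if_true]
            exact mul_nonneg (le_of_lt (inv_pos.2 h1μ)) (by linarith [htle v hv])
          · simp [hv]
        have hq1 : ∑ v, q v = 1 := by
          rw [hq]
          simp only []
          rw [← Finset.mul_sum, Finset.sum_ite_mem, Finset.univ_inter,
            Finset.sum_sub_distrib, hsumS, Finset.sum_const, nsmul_eq_mul]
          rw [hμ]
          field_simp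
          have hne : (1:ℝ) - t * S.card ≠ 0 := ne_of_gt (by linarith)
          exact div_self hne
        have hqm : ∀ x ∈ (↑C : Set V), ∀ y, G.Adj x y → q y ≤ q x := by
          intro x hx y hxy
          rw [hq]
          by_cases hy : y ∈ S
          · have hxS : x ∈ S := by
              have h1 : 0 < p y := hposS y hy
              have h2 : p y ≤ p x := hpm x hx y hxy
              exact (hmemS x).2 (ne_of_gt (lt_of_lt_of_le h1 h2))
            simp only [hy, hxS, if_true]
            have := hpm x hx y hxy
            have h1 : (0:ℝ) ≤ (1 - μ)⁻¹ := by positivity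
            apply mul_le_mul_of_nonneg_left _ h1
            linarith
          · simp only [hy, if_false, mul_zero]
            exact hq0 x
        have hqsupp : (Finset.univ.filter fun v => q v ≠ 0).card ≤ n := by
          have hsub : (Finset.univ.filter fun v => q v ≠ 0) ⊆ S.erase v0 := by
            intro v hv
            have hqv : q v ≠ 0 := (Finset.mem_filter.1 hv).2
            rw [hq] at hqv
            by_cases hvS : v ∈ S
            · refine Finset.mem_erase.2 ⟨?_, hvS⟩
              intro hveq
              rw [hveq] at hqv
              simp [hv0S, ← hv0] at hqv
              exact hqv.2 (sub_eq_zero.2 ht.symm)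
            · simp [hvS] at hqv
          calc (Finset.univ.filter fun v => q v ≠ 0).card
              ≤ (S.erase v0).card := Finset.card_le_card hsub
            _ = S.card - 1 := Finset.card_erase_of_mem hv0S
            _ ≤ n := by omega
        have hqhull := ih q hqsupp ⟨hq0, hq1, hqm⟩
        have hpeq : p = (1 - μ) • q + μ • uniformOn S := by
          funext v
          simp only [Pi.add_apply, Pi.smul_apply, smul_eq_mul, hq]
          unfold uniformOn
          by_cases hv : v ∈ S
          · simp only [hv, if_true]
            rw [hμ]
            field_simp
            rw [mul_div_cancel_left₀ _ (ne_of_gt (by linarith : (0:ℝ) < 1 - t * S.card))]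
            ring
          · simp only [hv, if_false, mul_zero, add_zero]
            by_contra h
            exact hv ((hmemS v).2 h)
        rw [hpeq]
        have hμ0 : (0:ℝ) ≤ μ := le_of_lt (by rw [hμ]; exact mul_pos htpos hcardS)
        exact (convex_convexHull ℝ _) hqhull hUS (le_of_lt h1μ) hμ0 (by ring)
  · exact convexHull_min (modeGens_subset hInd) convex_modePolytope
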